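/- Let f : ℝⁿ → ℝ be C^p with p ≥ 2 and satisfy the PL inequality around a local minimum x̄ with value f* and solution set S. Then S is a C^{p-1} embedded submanifold of ℝⁿ in a neighborhood of x̄, of codimension equal to rank ∇²f(x̄). -/

import Mathlib

open Metric Filter Topology InnerProductSpace
local notation "⟪" x ", " y "⟫" => @inner ℝ _ _ x y

section
variable {E : Type*} [NormedAddCommGroup E] [InnerProductSpace ℝ E] [CompleteSpace E]

lemma grad_inner {f : E → ℝ} (y v : E) : ⟪gradient f y, v⟫ = fderiv ℝ f y v := by
  simp [gradient, toDual_symm_apply]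

lemma descent_lemma {E : Type*} [NormedAddCommGroup E] [InnerProductSpace ℝ E] [CompleteSpace E]
    {f : E → ℝ} (hf : Differentiable ℝ f) {B : Set E} (hB : Convex ℝ B) {L : ℝ}
    (hLip : ∀ x ∈ B, ∀ y ∈ B, ‖gradient f x - gradient f y‖ ≤ L * ‖x - y‖)
    {x v : E} (hx : x ∈ B) (hxv : x + v ∈ B) :
    f (x + v) ≤ f x + ⟪gradient f x, v⟫ + L / 2 * ‖v‖ ^ 2 := by
  set g := gradient f with hg
  set c1 : ℝ := ⟪g x, v⟫ with hc1
  set c2 : ℝ := L / 2 * ‖v‖ ^ 2 with hc2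
  set F : ℝ → ℝ := fun t => f (x + t • v) - t * c1 - t ^ 2 * c2 with hF
  have hline : ∀ t ∈ Set.Icc (0:ℝ) 1, x + t • v ∈ B := fun t ht => hB.add_smul_mem hx hxv ht
  have hFd : ∀ t : ℝ, HasDerivAt F (⟪g (x + t • v), v⟫ - c1 - 2 * t * c2) t := by
    intro t
    have h1 : HasDerivAt (fun t : ℝ => x + t • v) v t := by
      simpa using ((hasDerivAt_id t).smul_const v).const_add x
    have h2 : HasDerivAt (fun t : ℝ => f (x + t • v)) (fderiv ℝ f (x + t • v) v) t :=
      (hf (x + t • v)).hasFDerivAt.comp_hasDerivAt t h1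
    rw [← grad_inner] at h2
    have h3 : HasDerivAt (fun t : ℝ => t * c1) c1 t := hasDerivAt_mul_const c1
    have h4 : HasDerivAt (fun t : ℝ => t ^ 2 * c2) (2 * t * c2) t := by
      simpa using (hasDerivAt_pow 2 t).mul_const c2
    exact (h2.sub h3).sub h4
  have hmono : AntitoneOn F (Set.Icc (0:ℝ) 1) := by
    apply antitoneOn_of_deriv_nonpos (convex_Icc 0 1)
    · exact fun t _ => (hFd t).continuousAt.continuousWithinAt
    · exact fun t _ => ((hFd t).differentiableAt).differentiableWithinAt
    · intro t ht
      rw [interior_Icc] at ht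
      rw [(hFd t).deriv]
      have hbd : ⟪g (x + t • v) - g x, v⟫ ≤ L * t * ‖v‖ ^ 2 := by
        calc ⟪g (x + t • v) - g x, v⟫ ≤ ‖g (x + t • v) - g x‖ * ‖v‖ :=
              real_inner_le_norm _ _
          _ ≤ (L * ‖x + t • v - x‖) * ‖v‖ := by
              gcongr
              exact hLip _ (hline t ⟨le_of_lt ht.1, le_of_lt ht.2⟩) x hx
          _ = L * t * ‖v‖ ^ 2 := by
              simp only [add_sub_cancel_left, norm_smul, Real.norm_eq_abs,
                abs_of_pos ht.1]
              ring
      have : ⟪g (x + t • v), v⟫ - c1 = ⟪g (x + t • v) - g x, v⟫ := by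
        rw [inner_sub_left]
      rw [this]
      rw [hc2]
      nlinarith [hbd]
  have h01 : F 1 ≤ F 0 := hmono (Set.mem_Icc.2 ⟨le_refl 0, zero_le_one⟩)
    (Set.mem_Icc.2 ⟨zero_le_one, le_refl 1⟩) zero_le_one
  have hF0 : F 0 = f x := by simp [hF]
  have hF1 : F 1 = f (x + v) - c1 - c2 := by simp [hF]
  rw [hF0, hF1] at h01
  linarith


/-- Descent step with step size `t ≤ 1/L`. -/
lemma descent_step {f : E → ℝ} (hf : Differentiable ℝ f) {B : Set E} (hB : Convex ℝ B) {L : ℝ}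
    (hL : 0 < L)
    (hLip : ∀ x ∈ B, ∀ y ∈ B, ‖gradient f x - gradient f y‖ ≤ L * ‖x - y‖)
    {x : E} {t : ℝ} (ht0 : 0 ≤ t) (ht : t ≤ 1 / L)
    (hx : x ∈ B) (hxv : x - t • gradient f x ∈ B) :
    f (x - t • gradient f x) ≤ f x - t / 2 * ‖gradient f x‖ ^ 2 := by
  have h := descent_lemma hf hB hLip hx (v := -(t • gradient f x)) (by simpa [sub_eq_add_neg] using hxv)
  rw [← sub_eq_add_neg] at h
  have hinner : ⟪gradient f x, -(t • gradient f x)⟫ = -(t * ‖gradient f x‖ ^ 2) := by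
    rw [inner_neg_right, real_inner_smul_right, real_inner_self_eq_norm_sq]
  rw [hinner] at h
  have hnv : ‖-(t • gradient f x)‖ ^ 2 = t ^ 2 * ‖gradient f x‖ ^ 2 := by
    rw [norm_neg, norm_smul, mul_pow, Real.norm_eq_abs, sq_abs]
  rw [hnv] at h
  have hLt : L * t ≤ 1 := by
    calc L * t ≤ L * (1 / L) := by gcongr
      _ = 1 := by field_simp
  nlinarith [mul_nonneg (mul_nonneg ht0 (sub_nonneg.2 hLt)) (sq_nonneg ‖gradient f x‖)]

set_option maxHeartbeats 2000000 in
/-- Key lemma: from a point with small excess near `xb`, gradient descent converges to a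
critical point at controlled distance. -/
lemma key_lemma' {f : E → ℝ} (hf : Differentiable ℝ f) (hfc : Continuous f)
    {xb : E} {ρ L μ : ℝ} (hρ : 0 < ρ) (hL : 0 < L) (hμ : 0 < μ) (hμL : 2 * μ ≤ L)
    (hLip : ∀ x ∈ closedBall xb ρ, ∀ y ∈ closedBall xb ρ,
      ‖gradient f x - gradient f y‖ ≤ L * ‖x - y‖)
    (hge : ∀ x ∈ closedBall xb ρ, f xb ≤ f x)
    (hPL : ∀ x ∈ closedBall xb ρ, f x - f xb ≤ 1 / (2 * μ) * ‖gradient f x‖ ^ 2)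
    {x₀ : E} (hx₀ : x₀ ∈ closedBall xb (ρ / 4))
    (hsm1 : f x₀ - f xb ≤ L * ρ ^ 2 / 32)
    (hsm2 : Real.sqrt (2 * (f x₀ - f xb) / L) ≤ (1 - Real.sqrt (1 - μ / L)) * (ρ / 4)) :
    ∃ z ∈ closedBall xb ρ, gradient f z = 0 ∧ f z = f xb ∧
      dist x₀ z ≤ Real.sqrt (2 * (f x₀ - f xb) / L) / (1 - Real.sqrt (1 - μ / L)) := by
  set g := gradient f with hgdef
  set h₀ : ℝ := f x₀ - f xb with hh₀def
  set q : ℝ := 1 - μ / L with hqdef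
  set s : ℝ := Real.sqrt q with hsdef
  set c₀ : ℝ := Real.sqrt (2 * h₀ / L) with hc₀def
  have hρ4 : closedBall xb (ρ/4) ⊆ closedBall xb ρ :=
    closedBall_subset_closedBall (by linarith)
  have hh₀ : 0 ≤ h₀ := sub_nonneg.2 (hge x₀ (hρ4 hx₀))
  have hq0 : 0 ≤ q := by
    have : μ / L ≤ 1 / 2 := by rw [div_le_div_iff₀ hL two_pos]; linarith
    simp only [hqdef]; linarith
  have hq1 : q < 1 := by
    have : 0 < μ / L := div_pos hμ hL
    simp only [hqdef]; linarith
  have hs0 : 0 ≤ s := Real.sqrt_nonneg q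
  have hs1 : s < 1 := by
    have := Real.sqrt_lt_sqrt hq0 hq1
    rwa [Real.sqrt_one] at this
  have h1s : 0 < 1 - s := by linarith
  have hc₀0 : 0 ≤ c₀ := Real.sqrt_nonneg _
  have hc₀ρ : c₀ ≤ (1 - s) * (ρ / 4) := hsm2
  have hc₀ρ4 : c₀ / (1 - s) ≤ ρ / 4 := by
    rw [div_le_iff₀ h1s]; calc c₀ ≤ (1-s)*(ρ/4) := hc₀ρ
      _ = ρ/4*(1-s) := by ring
  have hsq : s ^ 2 = q := Real.sq_sqrt hq0
  have hc₀sq : c₀ ^ 2 = 2 * h₀ / L := Real.sq_sqrt (by positivity)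
  -- the a priori gradient bound
  have gradb : ∀ y ∈ closedBall xb (ρ/2), f y - f xb ≤ L * ρ ^ 2 / 32 →
      ‖g y‖ ^ 2 ≤ 2 * L * (f y - f xb) := by
    intro y hy hsmall
    by_cases hcase : ‖g y‖ ≤ L * ρ / 2
    · have hmem : y - (1/L) • g y ∈ closedBall xb ρ := by
        rw [mem_closedBall] at hy ⊢
        calc dist (y - (1/L) • g y) xb ≤ dist (y - (1/L) • g y) y + dist y xb :=
              dist_triangle _ _ _
          _ ≤ ρ/2 + ρ/2 := by
              apply add_le_add _ hy
              rw [dist_eq_norm]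
              have : y - (1/L) • g y - y = -((1/L) • g y) := by abel
              rw [this, norm_neg, norm_smul, Real.norm_eq_abs, abs_of_pos (by positivity)]
              calc (1/L) * ‖g y‖ ≤ (1/L) * (L * ρ / 2) := by gcongr
                _ = ρ/2 := by field_simp
          _ = ρ := by ring
      have := descent_step hf (convex_closedBall xb ρ) hL hLip
        (by positivity) (le_refl (1/L)) (closedBall_subset_closedBall (by linarith : ρ/2 ≤ ρ) hy) hmem
      have hfb := hge _ hmem
      have hL' : (1/L)/2 * ‖g y‖^2 ≤ f y - f xb := by linarith
      calc ‖g y‖^2 = 2*L*((1/L)/2*‖g y‖^2) := by field_simp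
        _ ≤ 2*L*(f y - f xb) := by gcongr
    · exfalso
      push_neg at hcase
      have hgy0 : 0 < ‖g y‖ := lt_of_le_of_lt (by positivity) hcase
      set t : ℝ := ρ / (2 * ‖g y‖) with htdef
      have ht0 : 0 < t := by positivity
      have htL : t ≤ 1 / L := by
        rw [htdef, div_le_div_iff₀ (by positivity) hL]
        calc ρ * L = 2 * (L * ρ / 2) := by ring
          _ ≤ 2 * ‖g y‖ := by linarith
          _ = 1 * (2 * ‖g y‖) := (one_mul _).symm
      have htg : t * ‖g y‖ = ρ / 2 := by
        rw [htdef]; field_simp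
      have hmem : y - t • g y ∈ closedBall xb ρ := by
        rw [mem_closedBall] at hy ⊢
        calc dist (y - t • g y) xb ≤ dist (y - t • g y) y + dist y xb := dist_triangle _ _ _
          _ ≤ ρ/2 + ρ/2 := by
              apply add_le_add _ hy
              rw [dist_eq_norm]
              have : y - t • g y - y = -(t • g y) := by abel
              rw [this, norm_neg, norm_smul, Real.norm_eq_abs, abs_of_pos ht0, htg]
          _ = ρ := by ring
      have hdesc := descent_step hf (convex_closedBall xb ρ) hL hLip ht0.le htL
        (closedBall_subset_closedBall (by linarith : ρ/2 ≤ ρ) hy) hmem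
      have hfb := hge _ hmem
      have h1 : t/2 * ‖g y‖^2 ≤ f y - f xb := by linarith
      have h2 : t/2 * ‖g y‖^2 = ρ/4 * ‖g y‖ := by
        rw [sq, show t/2*(‖g y‖*‖g y‖) = (t*‖g y‖)*‖g y‖/2 from by ring, htg]
        ring
      have h3 : ρ/4 * ‖g y‖ > ρ/4 * (L*ρ/2) := by gcongr
      nlinarith
  -- the iteration
  set T : E → E := fun y => y - (1/L) • g y with hT
  set seq : ℕ → E := fun k => T^[k] x₀ with hseqdef
  have hseq0 : seq 0 = x₀ := rfl
  have hseqS : ∀ k, seq (k+1) = seq k - (1/L) • g (seq k) := fun k => by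
    simp only [hseqdef, Function.iterate_succ_apply' T k x₀]; rfl
  have hc₀le : c₀ ≤ ρ/4 := hc₀ρ.trans (by nlinarith)
  have memb : ∀ k, dist (seq k) x₀ ≤ c₀ * (1 - s^k)/(1-s) → seq k ∈ closedBall xb (ρ/2) := by
    intro k ih2
    have hsk0 : 0 ≤ s^k := pow_nonneg hs0 k
    rw [mem_closedBall]
    calc dist (seq k) xb ≤ dist (seq k) x₀ + dist x₀ xb := dist_triangle _ _ _
      _ ≤ c₀ * (1 - s^k)/(1-s) + ρ/4 := add_le_add ih2 (mem_closedBall.1 hx₀)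
      _ ≤ c₀/(1-s) + ρ/4 := by
          have h' : c₀ * (1 - s^k) ≤ c₀ := by nlinarith
          have := (div_le_div_iff_of_pos_right h1s).2 h'
          linarith
      _ ≤ ρ/4 + ρ/4 := by linarith [hc₀ρ4]
      _ = ρ/2 := by ring
  have stepb : ∀ k, (f (seq k) - f xb ≤ h₀ * q^k ∧ dist (seq k) x₀ ≤ c₀ * (1 - s^k)/(1-s)) →
      dist (seq k) (seq (k+1)) ≤ c₀ * s^k ∧
      f (seq (k+1)) - f xb ≤ h₀ * q^(k+1) ∧
      dist (seq (k+1)) x₀ ≤ c₀ * (1 - s^(k+1))/(1-s) := by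
    rintro k ⟨ih1, ih2⟩
    set y := seq k with hydef
    have hsk0 : 0 ≤ s^k := pow_nonneg hs0 k
    have hsk1 : s^k ≤ 1 := pow_le_one₀ hs0 hs1.le
    have hqk0 : 0 ≤ q^k := pow_nonneg hq0 k
    have hqk1 : q^k ≤ 1 := pow_le_one₀ hq0 hq1.le
    have hymem : y ∈ closedBall xb (ρ/2) := memb k ih2
    have hyρ : y ∈ closedBall xb ρ := closedBall_subset_closedBall (by linarith) hymem
    have hyq : f y - f xb ≤ L*ρ^2/32 := by
      calc f y - f xb ≤ h₀ * q^k := ih1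
        _ ≤ h₀ := by nlinarith
        _ ≤ L*ρ^2/32 := hsm1
    have hgb := gradb y hymem hyq
    have hy0 : 0 ≤ f y - f xb := sub_nonneg.2 (hge y hyρ)
    have hstep : ‖(1/L) • g y‖ ≤ c₀ * s^k := by
      have h1 : ‖(1/L) • g y‖^2 ≤ (c₀ * s^k)^2 := by
        rw [norm_smul, Real.norm_eq_abs, abs_of_pos (by positivity : (0:ℝ) < 1/L),
          mul_pow, mul_pow, ← pow_mul, mul_comm k 2, pow_mul, hsq, hc₀sq]
        calc (1/L)^2 * ‖g y‖^2 ≤ (1/L)^2 * (2*L*(h₀*q^k)) := by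
              apply mul_le_mul_of_nonneg_left _ (by positivity)
              exact hgb.trans (by nlinarith)
          _ = 2*h₀/L * q^k := by field_simp
      have h2 := Real.sqrt_le_sqrt h1
      rwa [Real.sqrt_sq (norm_nonneg _), Real.sqrt_sq (mul_nonneg hc₀0 hsk0)] at h2
    have hdist_step : dist (seq (k+1)) y = ‖(1/L) • g y‖ := by
      rw [hseqS k, dist_eq_norm]
      have : y - (1/L) • g y - y = -((1/L) • g y) := by abel
      rw [← hydef, this, norm_neg]
    have hnexteq : seq (k+1) = y - (1/L) • g y := hseqS k
    have hnext_mem : seq (k+1) ∈ closedBall xb ρ := by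
      rw [mem_closedBall]
      calc dist (seq (k+1)) xb ≤ dist (seq (k+1)) y + dist y xb := dist_triangle _ _ _
        _ ≤ c₀ * s^k + ρ/2 := add_le_add (le_of_eq_of_le hdist_step hstep)
            (mem_closedBall.1 hymem)
        _ ≤ ρ := by nlinarith
    have hdesc := descent_step hf (convex_closedBall xb ρ) hL hLip
      (by positivity : (0:ℝ) ≤ 1/L) (le_refl (1/L)) hyρ (hnexteq ▸ hnext_mem)
    have hPLy := hPL y hyρ
    have hf_next : f (seq (k+1)) - f xb ≤ h₀ * q^(k+1) := by
      rw [hnexteq]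
      have h3 : 2*μ*(f y - f xb) ≤ ‖g y‖^2 := by
        have h2μ : (0:ℝ) < 2*μ := by positivity
        rw [div_mul_eq_mul_div, one_mul, le_div_iff₀ h2μ] at hPLy
        linarith
      have hmul := mul_le_mul_of_nonneg_left h3 (le_of_lt (by positivity : (0:ℝ) < 1/(2*L)))
      have heq : 1/(2*L)*(2*μ*(f y - f xb)) = μ/L*(f y - f xb) := by field_simp
      have h4 : f (y - (1/L) • g y) - f xb ≤ q * (f y - f xb) := by
        have heq2 : q * (f y - f xb) = (f y - f xb) - μ/L*(f y - f xb) := by rw [hqdef]; ring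
        have heq3 : (1/L)/2 * ‖g y‖^2 = 1/(2*L) * ‖g y‖^2 := by ring
        rw [heq2]
        rw [heq3] at hdesc
        linarith [heq ▸ hmul]
      calc f (y - (1/L) • g y) - f xb ≤ q * (f y - f xb) := h4
        _ ≤ q * (h₀ * q^k) := by
            apply mul_le_mul_of_nonneg_left ih1 hq0
        _ = h₀ * q^(k+1) := by ring
    have hdist_next : dist (seq (k+1)) x₀ ≤ c₀ * (1 - s^(k+1))/(1-s) := by
      have heq : c₀ * s^k + c₀*(1-s^k)/(1-s) = c₀*(1-s^(k+1))/(1-s) := by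
        rw [pow_succ]; field_simp; ring
      calc dist (seq (k+1)) x₀ ≤ dist (seq (k+1)) y + dist y x₀ := dist_triangle _ _ _
        _ ≤ c₀ * s^k + c₀ * (1 - s^k)/(1-s) :=
            add_le_add (le_of_eq_of_le hdist_step hstep) ih2
        _ = c₀ * (1 - s^(k+1))/(1-s) := heq
    exact ⟨by rw [dist_comm]; exact le_of_eq_of_le hdist_step hstep, hf_next, hdist_next⟩
  have main : ∀ k, f (seq k) - f xb ≤ h₀ * q^k ∧ dist (seq k) x₀ ≤ c₀ * (1 - s^k)/(1-s) := by
    intro k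
    induction k with
    | zero =>
      constructor
      · simp [hseq0, hh₀def]
      · simp [hseq0]
    | succ k ih => exact ⟨(stepb k ih).2.1, (stepb k ih).2.2⟩
  have hcauchy : CauchySeq seq := cauchySeq_of_le_geometric s c₀ hs1 (fun k => (stepb k (main k)).1)
  obtain ⟨z, hz⟩ := cauchySeq_tendsto_of_complete hcauchy
  have hmemseq : ∀ k, seq k ∈ closedBall xb (ρ/2) := fun k => memb k (main k).2
  have hzmem : z ∈ closedBall xb (ρ/2) :=
    IsClosed.mem_of_tendsto Metric.isClosed_closedBall hz (Filter.Eventually.of_forall hmemseq)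
  have hzρ : z ∈ closedBall xb ρ := closedBall_subset_closedBall (by linarith) hzmem
  have htend : Tendsto (fun k => f (seq k)) atTop (𝓝 (f z)) := (hfc.tendsto z).comp hz
  have hfz_ge : f xb ≤ f z := ge_of_tendsto htend (Filter.Eventually.of_forall fun k =>
    hge _ (closedBall_subset_closedBall (by linarith) (hmemseq k)))
  have hfz_le : f z ≤ f xb := by
    have h2 : Tendsto (fun k : ℕ => f xb + h₀ * q^k) atTop (𝓝 (f xb + h₀ * 0)) :=
      tendsto_const_nhds.add ((tendsto_pow_atTop_nhds_zero_of_lt_one hq0 hq1).const_mul h₀)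
    rw [mul_zero, add_zero] at h2
    exact le_of_tendsto_of_tendsto' htend h2 (fun k => by linarith [(main k).1])
  have hfz : f z = f xb := le_antisymm hfz_le hfz_ge
  have hloc : IsLocalMin f z := by
    have hball : ball xb ρ ∈ 𝓝 z := isOpen_ball.mem_nhds
      (mem_ball.2 (lt_of_le_of_lt (mem_closedBall.1 hzmem) (by linarith)))
    exact Filter.eventually_of_mem hball
      (fun y hy => by rw [hfz]; exact hge y (ball_subset_closedBall hy))
  have hgz : gradient f z = 0 := by
    have h0 := hloc.fderiv_eq_zero
    simp [gradient, h0]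
  have hdistz : dist x₀ z ≤ c₀ / (1-s) := by
    have := dist_le_of_le_geometric_of_tendsto₀ s c₀ hs1 (fun k => (stepb k (main k)).1) hz
    simpa [hseq0] using this
  exact ⟨z, hzρ, hgz, hfz, hdistz⟩
end


lemma surj_stable {F G : Type*} [NormedAddCommGroup F] [NormedSpace ℝ F]
    [NormedAddCommGroup G] [NormedSpace ℝ G] [CompleteSpace G]
    (A A₀ : F →L[ℝ] G) (B : G →L[ℝ] F) (hB : ∀ z, A₀ (B z) = z)
    (hA : ‖A - A₀‖ < 1 / (‖B‖ + 1)) : Function.Surjective A := by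
  intro z
  have hBpos : (0:ℝ) < ‖B‖ + 1 := by positivity
  set e := (A - A₀).comp B with he_def
  have he : ‖e‖ < 1 := by
    calc ‖e‖ ≤ ‖A - A₀‖ * ‖B‖ := ContinuousLinearMap.opNorm_comp_le _ _
      _ ≤ ‖A - A₀‖ * (‖B‖ + 1) := by
          apply mul_le_mul_of_nonneg_left (by linarith) (norm_nonneg _)
      _ < (1 / (‖B‖ + 1)) * (‖B‖ + 1) := mul_lt_mul_of_pos_right hA hBpos
      _ = 1 := by field_simp
  have hne : ‖-e‖ < 1 := by rwa [norm_neg]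
  set u := Units.oneSub (-e) hne with hu_def
  have hu : A.comp B = (u : G →L[ℝ] G) := by
    rw [hu_def, Units.val_oneSub, sub_neg_eq_add]
    refine ContinuousLinearMap.ext fun w => ?_
    have h1 : e w = A (B w) - A₀ (B w) := by simp [he_def]
    rw [ContinuousLinearMap.comp_apply, ContinuousLinearMap.add_apply,
      ContinuousLinearMap.one_apply, h1, hB w]
    abel
  set uinv : G →L[ℝ] G := ↑u⁻¹ with huinv
  refine ⟨B (uinv z), ?_⟩
  have h2 : A (B (uinv z)) = (A.comp B) (uinv z) := rfl
  rw [h2, hu, huinv, ← ContinuousLinearMap.mul_apply, u.mul_inv,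
    ContinuousLinearMap.one_apply]

set_option maxHeartbeats 1000000 in
theorem pl_implies_submanifold {n : ℕ} (p : ℕ) (hp : 2 ≤ p)
    (f : EuclideanSpace ℝ (Fin n) → ℝ) (xb : EuclideanSpace ℝ (Fin n))
    (hf : ContDiff ℝ p f) (hmin : IsLocalMin f xb)
    (μ : ℝ) (hμ : 0 < μ)
    (S : Set (EuclideanSpace ℝ (Fin n)))
    (hS : S = {y | IsLocalMin f y ∧ f y = f xb})
    (hPL : ∀ᶠ x in 𝓝 xb, f x - f xb ≤ (1 / (2 * μ)) * ‖gradient f x‖ ^ 2) :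
    ∃ (U : Set (EuclideanSpace ℝ (Fin n)))
      (φ : EuclideanSpace ℝ (Fin n) →
        EuclideanSpace ℝ (Fin (Module.finrank ℝ (LinearMap.range (fderiv ℝ (gradient f) xb :
          EuclideanSpace ℝ (Fin n) →ₗ[ℝ] EuclideanSpace ℝ (Fin n)))))),
      IsOpen U ∧ xb ∈ U ∧ ContDiffOn ℝ (p - 1 : ℕ) φ U ∧
      (∀ x ∈ U, Function.Surjective (fderiv ℝ φ x)) ∧
      S ∩ U = {x ∈ U | φ x = 0} := by
  -- basic regularity facts
  have hpnat : p - 1 + 1 = p := Nat.sub_add_cancel (by omega)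
  have hp1 : ((p - 1 : ℕ) : WithTop ℕ∞) + 1 = (p : WithTop ℕ∞) := by exact_mod_cast hpnat
  have hp1' : (1 : WithTop ℕ∞) ≤ ((p - 1 : ℕ) : WithTop ℕ∞) := by
    exact_mod_cast (by omega : 1 ≤ p - 1)
  have hg_cd : ContDiff ℝ ((p - 1 : ℕ) : WithTop ℕ∞) (gradient f) := by
    have h1 : ContDiff ℝ ((p - 1 : ℕ) : WithTop ℕ∞) (fderiv ℝ f) := hf.fderiv_right (le_of_eq hp1)
    exact ((toDual ℝ (EuclideanSpace ℝ (Fin n))).symm.contDiff).comp h1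
  have hg_diff : Differentiable ℝ (gradient f) := hg_cd.differentiable (lt_of_lt_of_le zero_lt_one hp1').ne'
  have hf_diff : Differentiable ℝ f := hf.differentiable (by exact_mod_cast (by omega : p ≠ 0))
  have hDg_cont : Continuous (fderiv ℝ (gradient f)) := hg_cd.continuous_fderiv (lt_of_lt_of_le zero_lt_one hp1').ne'
  -- the Hessian and its range
  set H : EuclideanSpace ℝ (Fin n) →L[ℝ] EuclideanSpace ℝ (Fin n) :=
    fderiv ℝ (gradient f) xb with hH
  set V : Submodule ℝ (EuclideanSpace ℝ (Fin n)) := LinearMap.range (H : EuclideanSpace ℝ (Fin n) →ₗ[ℝ] EuclideanSpace ℝ (Fin n)) with hV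
  set Ec : V →L[ℝ] EuclideanSpace ℝ (Fin (Module.finrank ℝ V)) :=
    (stdOrthonormalBasis ℝ V).repr.toLinearIsometry.toContinuousLinearMap with hEc
  set T : EuclideanSpace ℝ (Fin n) →L[ℝ] EuclideanSpace ℝ (Fin (Module.finrank ℝ V)) :=
    Ec.comp (Submodule.orthogonalProjection V) with hT
  set Q : EuclideanSpace ℝ (Fin n) →L[ℝ] EuclideanSpace ℝ (Fin n) :=
    ContinuousLinearMap.id ℝ (EuclideanSpace ℝ (Fin n)) -
      (V.subtypeL.comp (Submodule.orthogonalProjection V)) with hQ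
  have hQapp : ∀ v, Q v = v - (Submodule.orthogonalProjection V v : EuclideanSpace ℝ (Fin n)) := by
    intro v
    rw [hQ]
    simp only [ContinuousLinearMap.sub_apply, ContinuousLinearMap.id_apply,
      ContinuousLinearMap.comp_apply, Submodule.subtypeL_apply]
  have hQH : ∀ w, Q (H w) = 0 := by
    intro w
    have hmem : H w ∈ V := LinearMap.mem_range.2 ⟨w, rfl⟩
    rw [hQapp, (show ((Submodule.orthogonalProjection V (H w) : V) : EuclideanSpace ℝ (Fin n)) = H w
      from Submodule.starProjection_eq_self_iff.2 hmem), sub_self]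
  have hQcompH : Q.comp H = 0 := ContinuousLinearMap.ext fun w => by
    rw [ContinuousLinearMap.comp_apply, hQH w, ContinuousLinearMap.zero_apply]
  -- surjectivity of T ∘ H and a right inverse
  have hsurj0 : Function.Surjective (T.comp H) := by
    intro z
    have hmem : (((stdOrthonormalBasis ℝ V).repr.symm z : V) : EuclideanSpace ℝ (Fin n))
        ∈ LinearMap.range (H : EuclideanSpace ℝ (Fin n) →ₗ[ℝ] EuclideanSpace ℝ (Fin n)) := ((stdOrthonormalBasis ℝ V).repr.symm z).2
    obtain ⟨w, hw⟩ := LinearMap.mem_range.1 hmem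
    refine ⟨w, ?_⟩
    have h1 : H w ∈ V := LinearMap.mem_range.2 ⟨w, rfl⟩
    have h2 : Submodule.orthogonalProjection V (H w) = (stdOrthonormalBasis ℝ V).repr.symm z := by
      apply Subtype.coe_injective
      show ((Submodule.orthogonalProjection V (H w) : V) : EuclideanSpace ℝ (Fin n)) = _
      rw [(show ((Submodule.orthogonalProjection V (H w) : V) : EuclideanSpace ℝ (Fin n)) = H w
        from Submodule.starProjection_eq_self_iff.2 h1)]; exact hw
    calc (T.comp H) w = Ec (Submodule.orthogonalProjection V (H w)) := rfl
      _ = Ec ((stdOrthonormalBasis ℝ V).repr.symm z) := by rw [h2]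
      _ = (stdOrthonormalBasis ℝ V).repr ((stdOrthonormalBasis ℝ V).repr.symm z) := rfl
      _ = z := (stdOrthonormalBasis ℝ V).repr.apply_symm_apply z
  obtain ⟨Blin, hBlin⟩ := LinearMap.exists_rightInverse_of_surjective
    ((T.comp H : EuclideanSpace ℝ (Fin n) →ₗ[ℝ] EuclideanSpace ℝ (Fin (Module.finrank ℝ V))))
      ((LinearMap.range_eq_top (f := (T.comp H : EuclideanSpace ℝ (Fin n) →ₗ[ℝ]
        EuclideanSpace ℝ (Fin (Module.finrank ℝ V))))).2 hsurj0)
  set Bc := LinearMap.toContinuousLinearMap Blin with hBc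
  have hBcr : ∀ z, (T.comp H) (Bc z) = z := fun z => by
    have := LinearMap.ext_iff.1 hBlin z
    exact this
  -- constants
  set L : ℝ := ‖H‖ + 1 with hLdef
  have hL : 0 < L := by positivity
  set μ' : ℝ := min μ (L / 2) with hμ'def
  have hμ'0 : 0 < μ' := lt_min hμ (by positivity)
  have hμ'L : 2 * μ' ≤ L := by
    have := min_le_right μ (L / 2)
    rw [hμ'def]; linarith [this]
  have hμ'μ : μ' ≤ μ := min_le_left _ _
  set s : ℝ := Real.sqrt (1 - μ' / L) with hsdef
  have hq0 : (0:ℝ) ≤ 1 - μ' / L := by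
    have : μ' / L ≤ 1 / 2 := by rw [div_le_div_iff₀ hL two_pos]; linarith
    linarith
  have hq1 : 1 - μ' / L < 1 := by
    have : 0 < μ' / L := div_pos hμ'0 hL
    linarith
  have hs0 : 0 ≤ s := Real.sqrt_nonneg _
  have hs1 : s < 1 := by
    have := Real.sqrt_lt_sqrt hq0 hq1
    rwa [Real.sqrt_one] at this
  have h1s : 0 < 1 - s := by linarith
  set C : ℝ := Real.sqrt (2 / L) * Real.sqrt (1 / (2 * μ')) / (1 - s) with hCdef
  have hC : 0 < C := by
    apply div_pos (mul_pos (Real.sqrt_pos.2 (by positivity)) (Real.sqrt_pos.2 (by positivity))) h1s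
  set ε : ℝ := 1 / (2 * C) with hεdef
  have hε : 0 < ε := by positivity
  have hεC : ε * C = 1 / 2 := by
    have hCne := hC.ne'
    rw [hεdef]; field_simp
  -- eventual statements near xb
  have hDg_tend : Tendsto (fderiv ℝ (gradient f)) (𝓝 xb) (𝓝 H) := hDg_cont.tendsto xb
  have ev3 : ∀ᶠ x in 𝓝 xb, ‖fderiv ℝ (gradient f) x‖ ≤ L := by
    filter_upwards [Metric.tendsto_nhds.1 hDg_tend 1 one_pos] with x hx
    rw [dist_eq_norm] at hx
    have := norm_sub_norm_le (fderiv ℝ (gradient f) x) H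
    rw [hLdef]; linarith
  have ev4 : ∀ᶠ x in 𝓝 xb, ‖Q.comp (fderiv ℝ (gradient f) x)‖ ≤ ε := by
    have htend : Tendsto (fun x => Q.comp (fderiv ℝ (gradient f) x)) (𝓝 xb) (𝓝 (Q.comp H)) :=
      (((ContinuousLinearMap.compL ℝ _ _ _ Q).continuous).tendsto H).comp hDg_tend
    filter_upwards [Metric.tendsto_nhds.1 htend ε hε] with x hx
    rw [hQcompH, dist_zero_right] at hx
    exact hx.le
  have ev5 : ∀ᶠ x in 𝓝 xb,
      ‖T.comp (fderiv ℝ (gradient f) x) - T.comp H‖ < 1 / (‖Bc‖ + 1) := by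
    have htend : Tendsto (fun x => T.comp (fderiv ℝ (gradient f) x)) (𝓝 xb) (𝓝 (T.comp H)) :=
      (((ContinuousLinearMap.compL ℝ _ _ _ T).continuous).tendsto H).comp hDg_tend
    filter_upwards [Metric.tendsto_nhds.1 htend (1 / (‖Bc‖ + 1)) (by positivity)] with x hx
    rwa [dist_eq_norm] at hx
  obtain ⟨ρ, hρpos, hρball⟩ := Metric.nhds_basis_closedBall.eventually_iff.1
    ((hmin.and (hPL.and (ev3.and (ev4.and ev5)))))
  -- facts on the closed ball of radius ρ
  have hge : ∀ x ∈ closedBall xb ρ, f xb ≤ f x := fun x hx => (hρball hx).1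
  have hPL' : ∀ x ∈ closedBall xb ρ, f x - f xb ≤ 1 / (2 * μ') * ‖gradient f x‖ ^ 2 := by
    intro x hx
    have h1 := (hρball hx).2.1
    have h2 : 1 / (2 * μ) * ‖gradient f x‖ ^ 2 ≤ 1 / (2 * μ') * ‖gradient f x‖ ^ 2 := by
      apply mul_le_mul_of_nonneg_right _ (sq_nonneg _)
      apply one_div_le_one_div_of_le (by positivity)
      linarith
    linarith
  have hLipρ : ∀ x ∈ closedBall xb ρ, ∀ y ∈ closedBall xb ρ,
      ‖gradient f x - gradient f y‖ ≤ L * ‖x - y‖ := by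
    intro x hx y hy
    exact Convex.norm_image_sub_le_of_norm_fderiv_le (fun u _ => hg_diff u)
      (fun u hu => (hρball hu).2.2.1) (convex_closedBall xb ρ) hy hx
  have hQg : ∀ x, HasFDerivAt (fun y => Q (gradient f y))
      (Q.comp (fderiv ℝ (gradient f) x)) x := fun x =>
    Q.hasFDerivAt.comp x (hg_diff x).hasFDerivAt
  have hQLip : ∀ x ∈ closedBall xb ρ, ∀ y ∈ closedBall xb ρ,
      ‖Q (gradient f x) - Q (gradient f y)‖ ≤ ε * ‖x - y‖ := by
    intro x hx y hy
    apply Convex.norm_image_sub_le_of_norm_fderiv_le (f := fun y => Q (gradient f y))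
      (fun u _ => (hQg u).differentiableAt)
      (fun u hu => by rw [(hQg u).fderiv]; exact (hρball hu).2.2.2.1)
      (convex_closedBall xb ρ) hy hx
  -- choice of the small radius ρ₁
  set δ : ℝ := min (L * ρ ^ 2 / 32) (L * ((1 - s) * (ρ / 4)) ^ 2 / 2) with hδdef
  have hδ : 0 < δ := lt_min (by positivity) (by positivity)
  obtain ⟨ρ₁', hρ₁'pos, hρ₁'⟩ := Metric.nhds_basis_closedBall.eventually_iff.1
    (Metric.tendsto_nhds.1 (hf_diff.continuous.tendsto xb) δ hδ)
  set ρ₁ : ℝ := min ρ₁' (ρ / 4) with hρ₁def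
  have hρ₁pos : 0 < ρ₁ := lt_min hρ₁'pos (by positivity)
  have hρ₁ρ4 : ρ₁ ≤ ρ / 4 := min_le_right _ _
  have hδx : ∀ x ∈ closedBall xb ρ₁, f x - f xb ≤ δ := by
    intro x hx
    have h1 := hρ₁' (closedBall_subset_closedBall (min_le_left _ _) hx)
    rw [Real.dist_eq] at h1
    exact (le_abs_self _).trans h1.le
  have hsubρ : closedBall xb ρ₁ ⊆ closedBall xb ρ :=
    closedBall_subset_closedBall (by linarith)
  -- the core converse implication
  have hcore : ∀ x₀ ∈ ball xb ρ₁, T (gradient f x₀) = 0 →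
      gradient f x₀ = 0 ∧ f x₀ = f xb ∧ IsLocalMin f x₀ := by
    intro x₀ hx₀U hφ0
    have hx₀b : x₀ ∈ closedBall xb ρ₁ := ball_subset_closedBall hx₀U
    have hx₀ρ4 : x₀ ∈ closedBall xb (ρ / 4) :=
      closedBall_subset_closedBall hρ₁ρ4 hx₀b
    have hx₀ρ : x₀ ∈ closedBall xb ρ := hsubρ hx₀b
    -- P (g x₀) = 0 hence Q (g x₀) = g x₀
    have hP0 : Submodule.orthogonalProjection V (gradient f x₀) = 0 := by
      have : Ec (Submodule.orthogonalProjection V (gradient f x₀)) = 0 := hφ0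
      have hinj : Function.Injective Ec := by
        intro a b hab
        exact (stdOrthonormalBasis ℝ V).repr.injective hab
      apply hinj
      rw [this, map_zero]
    have hQgx : Q (gradient f x₀) = gradient f x₀ := by
      rw [hQapp, hP0, Submodule.coe_zero, sub_zero]
    -- small excess
    have hδ0 := hδx x₀ hx₀b
    have hsm1 : f x₀ - f xb ≤ L * ρ ^ 2 / 32 := hδ0.trans (min_le_left _ _)
    have hsm2 : Real.sqrt (2 * (f x₀ - f xb) / L) ≤ (1 - s) * (ρ / 4) := by
      have h1 : 2 * (f x₀ - f xb) / L ≤ ((1 - s) * (ρ / 4)) ^ 2 := by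
        have h2 := hδ0.trans (min_le_right _ _)
        rw [div_le_iff₀ hL]
        linarith
      calc Real.sqrt (2 * (f x₀ - f xb) / L) ≤ Real.sqrt (((1 - s) * (ρ / 4)) ^ 2) :=
            Real.sqrt_le_sqrt h1
        _ = (1 - s) * (ρ / 4) := Real.sqrt_sq (by positivity)
    obtain ⟨z, hzρ, hgz, hfz, hdistz⟩ := key_lemma' hf_diff hf_diff.continuous hρpos hL hμ'0
      hμ'L hLipρ hge hPL' hx₀ρ4 hsm1 hsm2
    -- distance bound in terms of the gradient
    have hh₀ : 0 ≤ f x₀ - f xb := sub_nonneg.2 (hge x₀ hx₀ρ)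
    have hPLx₀ := hPL' x₀ hx₀ρ
    have hdC : dist x₀ z ≤ C * ‖gradient f x₀‖ := by
      have h1 : Real.sqrt (2 * (f x₀ - f xb) / L)
          = Real.sqrt (2 / L) * Real.sqrt (f x₀ - f xb) := by
        rw [show 2 * (f x₀ - f xb) / L = (2 / L) * (f x₀ - f xb) by ring,
          Real.sqrt_mul (by positivity)]
      have h2 : Real.sqrt (f x₀ - f xb) ≤ Real.sqrt (1 / (2 * μ')) * ‖gradient f x₀‖ := by
        calc Real.sqrt (f x₀ - f xb) ≤ Real.sqrt (1 / (2 * μ') * ‖gradient f x₀‖ ^ 2) :=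
              Real.sqrt_le_sqrt hPLx₀
          _ = Real.sqrt (1 / (2 * μ')) * ‖gradient f x₀‖ := by
              rw [Real.sqrt_mul (by positivity), Real.sqrt_sq (norm_nonneg _)]
      calc dist x₀ z ≤ Real.sqrt (2 * (f x₀ - f xb) / L) / (1 - s) := hdistz
        _ ≤ (Real.sqrt (2 / L) * (Real.sqrt (1 / (2 * μ')) * ‖gradient f x₀‖)) / (1 - s) := by
            rw [h1]
            gcongr
        _ = C * ‖gradient f x₀‖ := by rw [hCdef]; ring
    -- conclude gradient vanishes
    have hgx₀0 : gradient f x₀ = 0 := by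
      have h1 : ‖gradient f x₀‖ = ‖Q (gradient f x₀) - Q (gradient f z)‖ := by
        rw [hgz, map_zero, sub_zero, hQgx]
      have h2 : ‖Q (gradient f x₀) - Q (gradient f z)‖ ≤ ε * ‖x₀ - z‖ :=
        hQLip x₀ hx₀ρ z hzρ
      have h3 : ‖x₀ - z‖ = dist x₀ z := (dist_eq_norm x₀ z).symm
      have h4 : ‖gradient f x₀‖ ≤ ε * (C * ‖gradient f x₀‖) := by
        calc ‖gradient f x₀‖ = ‖Q (gradient f x₀) - Q (gradient f z)‖ := h1
          _ ≤ ε * ‖x₀ - z‖ := h2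
          _ = ε * dist x₀ z := by rw [h3]
          _ ≤ ε * (C * ‖gradient f x₀‖) := mul_le_mul_of_nonneg_left hdC hε.le

      have h5 : ε * (C * ‖gradient f x₀‖) = 1 / 2 * ‖gradient f x₀‖ := by
        rw [← mul_assoc, hεC]
      rw [h5] at h4
      have : ‖gradient f x₀‖ ≤ 0 := by linarith
      exact norm_le_zero_iff.1 this
    have hfx₀ : f x₀ = f xb := by
      have := hPL' x₀ hx₀ρ
      rw [hgx₀0] at this
      simp at this
      have h2 := hge x₀ hx₀ρ
      linarith
    have hloc : IsLocalMin f x₀ := by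
      have hball : ball xb ρ ∈ 𝓝 x₀ := isOpen_ball.mem_nhds
        (mem_ball.2 (lt_of_lt_of_le (lt_of_lt_of_le (mem_ball.1 hx₀U) hρ₁ρ4) (by linarith)))
      exact Filter.eventually_of_mem hball
        (fun y hy => by rw [hfx₀]; exact hge y (ball_subset_closedBall hy))
    exact ⟨hgx₀0, hfx₀, hloc⟩
  -- assemble
  have hTg : ∀ x, HasFDerivAt (fun y => T (gradient f y))
      (T.comp (fderiv ℝ (gradient f) x)) x := fun x =>
    T.hasFDerivAt.comp x (hg_diff x).hasFDerivAt
  refine ⟨ball xb ρ₁, fun x => T (gradient f x), isOpen_ball, mem_ball_self hρ₁pos, ?_, ?_, ?_⟩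
  · exact (T.contDiff.comp hg_cd).contDiffOn
  · intro x hx
    rw [(hTg x).fderiv]
    exact surj_stable _ _ Bc hBcr (hρball (hsubρ (ball_subset_closedBall hx))).2.2.2.2
  · ext x
    simp only [Set.mem_inter_iff, Set.mem_setOf_eq]
    constructor
    · rintro ⟨hxS, hxU⟩
      refine ⟨hxU, ?_⟩
      rw [hS] at hxS
      have hgx0 : gradient f x = 0 := by
        have := hxS.1.fderiv_eq_zero
        simp [gradient, this]
      rw [hgx0, map_zero]
    · rintro ⟨hxU, hφ⟩
      obtain ⟨hg0, hfeq, hloc⟩ := hcore x hxU hφ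
      exact ⟨by rw [hS]; exact ⟨hloc, hfeq⟩, hxU⟩
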